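/- In the simple cycle barrier coverage problem, if λ* > 0, then λ* equals the maximum of the set Λ = { (x_j − x_i − 2r(j−i))/2 : 1 ≤ i ≤ n and i < j < i + n }, where the extended coordinates satisfy x_{k+n} = x_k + L for 1 ≤ k ≤ n. -/

import Mathlib

/-- Cycle case: the placement `y` of sensors `1, …, n` (points of the cycle `ℝ/Lℤ`),
all with range `r`, covers the whole cycle. -/
def CycCovers (n : ℕ) (L r : ℝ) (y : ℕ → AddCircle L) : Prop :=
  ∀ p : AddCircle L, ∃ i, 1 ≤ i ∧ i ≤ n ∧ dist p (y i) ≤ r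

/-- The maximum movement of the placement `y`: the largest cycle-distance between a
sensor's initial point (represented by the real coordinate `x i`) and its placed point. -/
noncomputable def CycMaxMove (n : ℕ) (L : ℝ) (x : ℕ → ℝ) (y : ℕ → AddCircle L) : ℝ :=
  sSup ((fun i => dist ((x i : AddCircle L)) (y i)) '' Set.Icc 1 n)

/-- `λ*` for the cycle: the infimum of the maximum movement over all covering placements. -/
noncomputable def CycLamStar (n : ℕ) (L r : ℝ) (x : ℕ → ℝ) : ℝ :=
  sInf (CycMaxMove n L x '' {y : ℕ → AddCircle L | CycCovers n L r y})

section Helpers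

lemma round_min (x : ℝ) (m : ℤ) : |x - round x| ≤ |x - m| := by
  rcases le_or_gt (1/2 : ℝ) (|x - m|) with h | h
  · exact (abs_sub_round x).trans h
  · have : round x = m := by
      have h2 : round ((x - m) + m) = round ((x:ℝ) - m) + m := round_add_intCast _ _
      have h0 : round ((x:ℝ) - m) = 0 := by
        rw [round_eq_zero_iff]
        constructor
        · nlinarith [abs_lt.1 h]
        · nlinarith [abs_lt.1 h]
      simpa [h0] using h2
    rw [this]

lemma coe_sub_circ (L u v : ℝ) :
    ((u : AddCircle L)) - ((v : ℝ) : AddCircle L) = ((u - v : ℝ) : AddCircle L) := rfl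

lemma dist_circ_eq (L : ℝ) (u v : ℝ) :
    dist ((u : AddCircle L)) ((v : ℝ) : AddCircle L)
      = |(u - v) - round (L⁻¹ * (u - v)) * L| := by
  rw [dist_eq_norm, coe_sub_circ, AddCircle.norm_eq]

lemma abs_sub_round_mul (L : ℝ) (hL : 0 < L) (w : ℝ) (k : ℤ) :
    |w - (k:ℝ) * L| = L * |L⁻¹ * w - k| := by
  have h1 : L * |L⁻¹ * w - (k:ℝ)| = |L * (L⁻¹ * w - (k:ℝ))| := by
    rw [abs_mul, abs_of_pos hL]
  rw [h1, mul_sub, mul_inv_cancel_left₀ hL.ne', mul_comm]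

lemma dist_circ_le (L : ℝ) (hL : 0 < L) (u v : ℝ) :
    dist ((u : AddCircle L)) ((v : ℝ) : AddCircle L) ≤ |u - v| := by
  rw [dist_circ_eq, abs_sub_round_mul L hL]
  calc L * |L⁻¹ * (u-v) - (round (L⁻¹ * (u-v)) : ℤ)| ≤ L * |L⁻¹ * (u-v) - ((0:ℤ):ℝ)| :=
        mul_le_mul_of_nonneg_left (round_min _ 0) hL.le
    _ = |u - v| := by
        rw [Int.cast_zero, sub_zero, abs_mul, abs_inv, abs_of_pos hL]
        field_simp

lemma away (L r d : ℝ) (hL : 0 < L) (h1 : 2*r < |d|) (h2 : |d| < L - 2*r) (u : ℤ) :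
    2*r < |d - u*L| := by
  rcases lt_trichotomy u 0 with hu | hu | hu
  · have hu' : (u:ℝ) ≤ -1 := by exact_mod_cast (by omega : u ≤ -1)
    have habs := abs_lt.mp h2
    have hnn : (0:ℝ) ≤ (-(u:ℝ) - 1) * L := mul_nonneg (by linarith) hL.le
    calc 2*r < d - u*L := by nlinarith [habs.1]
      _ ≤ |d - u*L| := le_abs_self _
  · subst hu; simpa using h1
  · have hu' : (1:ℝ) ≤ (u:ℝ) := by exact_mod_cast hu
    have habs := abs_lt.mp h2
    have hnn : (0:ℝ) ≤ ((u:ℝ) - 1) * L := mul_nonneg (by linarith) hL.le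
    calc 2*r < u*L - d := by nlinarith [habs.2]
      _ ≤ |d - u*L| := by rw [abs_sub_comm]; exact le_abs_self _

lemma xe_mono (n : ℕ) (L : ℝ) (x xe : ℕ → ℝ) (hL : 0 < L)
    (hx0 : 0 < x 1) (hxL : x n < L)
    (hsort : ∀ i j, 1 ≤ i → i ≤ j → j ≤ n → x i ≤ x j)
    (hxe : ∀ k, 1 ≤ k → k ≤ n → xe k = x k)
    (hxe' : ∀ k, 1 ≤ k → k ≤ n → xe (k + n) = x k + L) :
    ∀ a b, 1 ≤ a → a ≤ b → b ≤ 2*n → xe a ≤ xe b := by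
  intro a b ha hab hb2
  have hxpos : ∀ k, 1 ≤ k → k ≤ n → 0 < x k := fun k h1 h2 =>
    lt_of_lt_of_le hx0 (hsort 1 k le_rfl h1 h2)
  have hxlt : ∀ k, 1 ≤ k → k ≤ n → x k < L := fun k h1 h2 =>
    lt_of_le_of_lt (hsort k n h1 h2 le_rfl) hxL
  rcases le_or_gt a n with han | han
  · rcases le_or_gt b n with hbn | hbn
    · rw [hxe a ha han, hxe b (by omega) hbn]; exact hsort a b ha hab hbn
    · have hb1 : 1 ≤ b - n := by omega
      have hbn' : b - n ≤ n := by omega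
      have hb : xe b = x (b - n) + L := by
        have := hxe' (b - n) hb1 hbn'
        rwa [Nat.sub_add_cancel (by omega)] at this
      rw [hxe a ha han, hb]
      have := hxpos (b - n) hb1 hbn'
      have := hxlt a ha han
      linarith
  · have ha1 : 1 ≤ a - n := by omega
    have han' : a - n ≤ n := by omega
    have hb1 : 1 ≤ b - n := by omega
    have hbn' : b - n ≤ n := by omega
    have e1 : xe a = x (a - n) + L := by
      have := hxe' (a - n) ha1 han'
      rwa [Nat.sub_add_cancel (by omega)] at this
    have e2 : xe b = x (b - n) + L := by
      have := hxe' (b - n) hb1 hbn'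
      rwa [Nat.sub_add_cancel (by omega)] at this
    rw [e1, e2]
    have := hsort (a-n) (b-n) ha1 (by omega) hbn'
    linarith

lemma chain_cover (L r : ℝ) (hL : 0 < L) (P : ℕ → ℝ) (a b : ℕ) (hab : a ≤ b)
    (hgap : ∀ k, a ≤ k → k < b → P (k+1) ≤ P k + 2*r)
    (hwrap : P a + L ≤ P b + 2*r) (q : AddCircle L) :
    ∃ k, a ≤ k ∧ k ≤ b ∧ dist q ((P k : ℝ) : AddCircle L) ≤ r := by
  induction q using QuotientAddGroup.induction_on with
  | H w =>
  set b' : ℝ := toIcoMod hL (P a) w with hb'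
  have hmem := toIcoMod_mem_Ico hL (P a) w
  have hcoe : ((b' : ℝ) : AddCircle L) = (w : AddCircle L) := by
    have hmem' : b' - w ∈ AddSubgroup.zmultiples L := by
      rw [toIcoMod_sub_self]; exact AddSubgroup.zsmul_mem_zmultiples _ _
    exact QuotientAddGroup.eq_iff_sub_mem.mpr hmem'
  set S : Finset ℕ := (Finset.Icc a b).filter (fun k => P k ≤ b') with hSdef
  have hS : S.Nonempty := ⟨a, by simp [hSdef, hab]; exact hmem.1⟩
  set k0 := S.max' hS with hk0
  have hk0mem := S.max'_mem hS
  obtain ⟨hmemIcc, hPk0⟩ := Finset.mem_filter.mp hk0mem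
  obtain ⟨hak0, hk0b⟩ := Finset.mem_Icc.mp hmemIcc
  rcases le_or_gt b' (P k0 + r) with hc | hc
  · refine ⟨k0, hak0, hk0b, ?_⟩
    rw [← hcoe]
    refine (dist_circ_le L hL b' (P k0)).trans ?_
    rw [abs_of_nonneg (by linarith)]
    linarith
  · rcases lt_or_eq_of_le hk0b with hlt | heq
    · have hnotin : ¬ (P (k0+1) ≤ b') := by
        intro h
        have hmm : k0 + 1 ∈ S := by
          rw [hSdef, Finset.mem_filter, Finset.mem_Icc]
          exact ⟨⟨by omega, by omega⟩, h⟩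
        have := S.le_max' (k0+1) hmm
        omega
      push_neg at hnotin
      have hgap' := hgap k0 hak0 hlt
      refine ⟨k0+1, by omega, by omega, ?_⟩
      rw [← hcoe]
      refine (dist_circ_le L hL b' (P (k0+1))).trans ?_
      rw [abs_of_nonpos (by linarith)]
      linarith
    · refine ⟨a, le_refl a, hab, ?_⟩
      rw [← hcoe]
      have hper : ((P a : ℝ) : AddCircle L) = ((P a + L : ℝ) : AddCircle L) :=
        (AddCircle.coe_add_period L (P a)).symm
      rw [hper]
      refine (dist_circ_le L hL b' (P a + L)).trans ?_
      have h2 : b' < P a + L := hmem.2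
      have hc' : P b + r < b' := by rw [← heq]; exact hc
      rw [abs_of_nonpos (by linarith)]
      linarith

end Helpers

lemma lemA (n : ℕ) (hn : 1 ≤ n) (L r : ℝ) (hr : 0 < r) (hL : 0 < L)
    (x : ℕ → ℝ) (hx0 : 0 < x 1) (hxL : x n < L)
    (hsort : ∀ i j, 1 ≤ i → i ≤ j → j ≤ n → x i ≤ x j)
    (xe : ℕ → ℝ)
    (hxe : ∀ k, 1 ≤ k → k ≤ n → xe k = x k)
    (hxe' : ∀ k, 1 ≤ k → k ≤ n → xe (k + n) = x k + L)
    (hmono : ∀ a b, 1 ≤ a → a ≤ b → b ≤ 2*n → xe a ≤ xe b)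
    (hper : ∀ a, 1 ≤ a → a ≤ n → xe (a + n) = xe a + L)
    (y : ℕ → AddCircle L) (hy : CycCovers n L r y)
    (hm : 0 < CycMaxMove n L x y)
    (i j : ℕ) (hi1 : 1 ≤ i) (hin : i ≤ n) (hij : i < j) (hjin : j < i + n) :
    (xe j - xe i - 2*r*((j:ℝ)-(i:ℝ)))/2 ≤ CycMaxMove n L x y := by
  set m := CycMaxMove n L x y with hmdef
  set v := (xe j - xe i - 2*r*((j:ℝ)-(i:ℝ)))/2 with hvdef
  by_contra hcon
  push_neg at hcon   -- hcon : m < v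
  have hbdd : BddAbove ((fun i => dist ((x i : AddCircle L)) (y i)) '' Set.Icc 1 n) :=
    ((Set.finite_Icc 1 n).image _).bddAbove
  have hmove : ∀ k, 1 ≤ k → k ≤ n → dist ((x k : AddCircle L)) (y k) ≤ m :=
    fun k h1 h2 => le_csSup hbdd ⟨k, ⟨h1, h2⟩, rfl⟩
  have hxpos : ∀ k, 1 ≤ k → k ≤ n → 0 < x k := fun k h1 h2 =>
    lt_of_lt_of_le hx0 (hsort 1 k le_rfl h1 h2)
  have hxlt : ∀ k, 1 ≤ k → k ≤ n → x k < L := fun k h1 h2 =>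
    lt_of_le_of_lt (hsort k n h1 h2 le_rfl) hxL
  set N := j - i with hNdef
  have hN1 : 1 ≤ N := by omega
  have hNc : (N:ℝ) = (j:ℝ) - (i:ℝ) := by
    rw [hNdef]; push_cast [Nat.cast_sub hij.le]; ring
  set δ := (v - m)/(N:ℝ) with hδdef
  have hNpos : (0:ℝ) < N := by exact_mod_cast hN1
  have hδ : 0 < δ := div_pos (by linarith) hNpos
  have hNδ : (N:ℝ) * δ = v - m := by
    rw [hδdef]; field_simp
  set q : ℕ → ℝ := fun s => xe i + (m + r) + δ + s*(2*r + δ) with hqdef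
  have hxei : xe i = x i := hxe i hi1 hin
  have hxeipos : 0 < xe i := by rw [hxei]; exact hxpos i hi1 hin
  have hxej2L : xe j < 2*L := by
    rcases le_or_gt j n with hjn | hjn
    · rw [hxe j (by omega) hjn]
      have := hxlt j (by omega) hjn
      linarith
    · have h1 : 1 ≤ j - n := by omega
      have h2 : j - n ≤ n := by omega
      have e : xe j = x (j - n) + L := by
        have := hxe' (j-n) h1 h2
        rwa [Nat.sub_add_cancel (by omega)] at this
      rw [e]
      have := hxlt (j-n) h1 h2
      linarith
  have hxejL : xe j ≤ xe i + L := by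
    have h1 : xe j ≤ xe (i + n) := hmono j (i+n) (by omega) (by omega) (by omega)
    rw [hper i hi1 hin] at h1
    exact h1
  have hvj : xe j = xe i + 2*v + 2*r*(N:ℝ) := by
    rw [hvdef, hNc]; ring
  -- key step: each point q s is near some xe k' with i < k' < j
  have key : ∀ s : ℕ, ∃ k k' : ℕ, s < N →
      (1 ≤ k ∧ k ≤ n ∧ dist ((q s : ℝ) : AddCircle L) (y k) ≤ r) ∧
      i < k' ∧ k' < j ∧ (k' = k ∨ k' = k + n) := by
    intro s
    obtain ⟨k, hk1, hkn, hkd⟩ := hy ((q s : ℝ) : AddCircle L)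
    by_cases hs : s < N
    swap
    · exact ⟨k, k, fun h => absurd h hs⟩
    have hsN : (s:ℝ) ≤ (N:ℝ) - 1 := by
      have : (s:ℝ) + 1 ≤ (N:ℝ) := by exact_mod_cast hs
      linarith
    have hsnn : (0:ℝ) ≤ (s:ℝ) := Nat.cast_nonneg s
    have htri : dist ((q s : ℝ) : AddCircle L) ((x k : ℝ) : AddCircle L) ≤ m + r := by
      calc dist ((q s : ℝ) : AddCircle L) ((x k : ℝ) : AddCircle L)
          ≤ dist ((q s : ℝ) : AddCircle L) (y k) + dist (y k) ((x k : ℝ) : AddCircle L) :=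
            dist_triangle _ _ _
        _ ≤ r + m := by
            have := hmove k hk1 hkn
            rw [dist_comm] at this
            linarith
        _ = m + r := by ring
    set t := round (L⁻¹ * (q s - x k)) with htdef
    have hdeq := dist_circ_eq L (q s) (x k)
    rw [hdeq] at htri
    set z := x k + (t:ℝ) * L with hzdef
    have hz : |q s - z| ≤ m + r := by
      have : q s - x k - (t:ℝ) * L = q s - z := by rw [hzdef]; ring
      rwa [this] at htri
    have hzlo : q s - (m + r) ≤ z := by
      have := abs_le.mp hz
      linarith [this.2]
    have hzhi : z ≤ q s + (m + r) := by
      have := abs_le.mp hz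
      linarith [this.1]
    have hqs_lo : xe i + (m + r) + δ ≤ q s := by
      rw [hqdef]
      have : (0:ℝ) ≤ (s:ℝ) * (2*r + δ) := mul_nonneg hsnn (by linarith)
      simp only []
      linarith
    have hqs_hi : q s ≤ xe i + (m + r) + δ + ((N:ℝ) - 1)*(2*r + δ) := by
      rw [hqdef]
      have : (s:ℝ) * (2*r + δ) ≤ ((N:ℝ) - 1) * (2*r + δ) :=
        mul_le_mul_of_nonneg_right hsN (by linarith)
      simp only []
      linarith
    have hz1 : xe i < z := by linarith
    have hz2 : z < xe j := by
      have : z ≤ xe i + 2*(m+r) + δ + ((N:ℝ)-1)*(2*r+δ) := by linarith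
      have hexp : xe i + 2*(m+r) + δ + ((N:ℝ)-1)*(2*r+δ) = xe i + 2*m + 2*r*(N:ℝ) + (N:ℝ)*δ := by
        ring
      rw [hexp] at this
      rw [hNδ] at this
      rw [hvj]
      linarith
    -- t is 0 or 1
    have hxk0 : 0 < x k := hxpos k hk1 hkn
    have hxkL : x k < L := hxlt k hk1 hkn
    have ht0 : (0:ℤ) ≤ t := by
      by_contra hneg
      push_neg at hneg
      have hc : (t:ℝ) ≤ -1 := by exact_mod_cast (by omega : t ≤ -1)
      have h1 : -L < (t:ℝ) * L := by linarith
      have h2 : (t:ℝ) * L ≤ (-1) * L := mul_le_mul_of_nonneg_right hc hL.le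
      linarith
    have ht1 : t ≤ (1:ℤ) := by
      by_contra hbig
      push_neg at hbig
      have hc : (2:ℝ) ≤ (t:ℝ) := by exact_mod_cast (by omega : (2:ℤ) ≤ t)
      have h1 : (t:ℝ) * L < 2*L := by linarith
      have h2 : (2:ℝ) * L ≤ (t:ℝ) * L := mul_le_mul_of_nonneg_right hc hL.le
      linarith
    clear_value t z
    have ht01 : t = 0 ∨ t = 1 := by omega
    have hzeq : ∃ k', xe k' = z ∧ (k' = k ∨ k' = k + n) ∧ 1 ≤ k' ∧ k' ≤ 2*n := by
      rcases ht01 with h | h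
      · exact ⟨k, by rw [hxe k hk1 hkn, hzdef, h]; push_cast; ring, Or.inl rfl, by omega, by omega⟩
      · exact ⟨k + n, by rw [hxe' k hk1 hkn, hzdef, h]; push_cast; ring, Or.inr rfl, by omega, by omega⟩
    obtain ⟨k', hk'eq, hk'or, hk'1, hk'2n⟩ := hzeq
    refine ⟨k, k', fun _ => ⟨⟨hk1, hkn, hkd⟩, ?_, ?_, hk'or⟩⟩
    · by_contra hle
      push_neg at hle
      have := hmono k' i hk'1 hle (by omega)
      rw [hk'eq] at this
      linarith
    · by_contra hle
      push_neg at hle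
      have := hmono j k' (by omega) hle hk'2n
      rw [hk'eq] at this
      linarith
  choose f g hfg using key
  -- pigeonhole
  have hcard : (Finset.Ioo i j).card < (Finset.range N).card := by
    rw [Nat.card_Ioo, Finset.card_range]
    omega
  have hmaps : ∀ s ∈ Finset.range N, g s ∈ Finset.Ioo i j := by
    intro s hs
    rw [Finset.mem_range] at hs
    obtain ⟨_, h1, h2, _⟩ := hfg s hs
    exact Finset.mem_Ioo.mpr ⟨h1, h2⟩
  obtain ⟨s, hs, s', hs', hne, heq⟩ :=
    Finset.exists_ne_map_eq_of_card_lt_of_maps_to hcard hmaps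
  rw [Finset.mem_range] at hs hs'
  obtain ⟨⟨hf1, hfn, hfd⟩, _, _, hor⟩ := hfg s hs
  obtain ⟨⟨hf1', hfn', hfd'⟩, _, _, hor'⟩ := hfg s' hs'
  have hff : f s = f s' := by
    rcases hor with h | h <;> rcases hor' with h' | h' <;> omega
  -- both q s and q s' within r of y (f s)
  have hdd : dist ((q s : ℝ) : AddCircle L) ((q s' : ℝ) : AddCircle L) ≤ 2*r := by
    calc dist ((q s : ℝ) : AddCircle L) ((q s' : ℝ) : AddCircle L)
        ≤ dist ((q s : ℝ) : AddCircle L) (y (f s)) +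
          dist (y (f s)) ((q s' : ℝ) : AddCircle L) := dist_triangle _ _ _
      _ ≤ r + r := by
          rw [hff, dist_comm (y (f s'))]
          rw [hff] at hfd
          linarith
      _ = 2*r := by ring
  -- but actual distance exceeds 2r
  set d := q s - q s' with hddef
  have hdform : d = ((s:ℝ) - (s':ℝ)) * (2*r + δ) := by
    rw [hddef, hqdef]; simp only []; ring
  have habs1 : (1:ℝ) ≤ |(s:ℝ) - (s':ℝ)| := by
    rcases Nat.lt_or_ge s s' with h | h
    · rw [abs_sub_comm, abs_of_nonneg (by
        have : (s:ℝ) ≤ (s':ℝ) := by exact_mod_cast h.le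
        linarith)]
      have : (s:ℝ) + 1 ≤ (s':ℝ) := by exact_mod_cast h
      linarith
    · have hlt : s' < s := by omega
      rw [abs_of_nonneg (by
        have : (s':ℝ) ≤ (s:ℝ) := by exact_mod_cast hlt.le
        linarith)]
      have : (s':ℝ) + 1 ≤ (s:ℝ) := by exact_mod_cast hlt
      linarith
  have habs2 : |(s:ℝ) - (s':ℝ)| ≤ (N:ℝ) - 1 := by
    rw [abs_sub_le_iff]
    constructor
    · have h1 : (s:ℝ) + 1 ≤ (N:ℝ) := by exact_mod_cast hs
      have h2 : (0:ℝ) ≤ (s':ℝ) := Nat.cast_nonneg _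
      linarith
    · have h1 : (s':ℝ) + 1 ≤ (N:ℝ) := by exact_mod_cast hs'
      have h2 : (0:ℝ) ≤ (s:ℝ) := Nat.cast_nonneg _
      linarith
  have hdabs : |d| = |(s:ℝ) - (s':ℝ)| * (2*r + δ) := by
    rw [hdform, abs_mul, abs_of_nonneg (by linarith : (0:ℝ) ≤ 2*r + δ)]
  have hdlo : 2*r < |d| := by
    rw [hdabs]
    have h1 : (1:ℝ) * (2*r + δ) ≤ |(s:ℝ) - (s':ℝ)| * (2*r + δ) :=
      mul_le_mul_of_nonneg_right habs1 (by linarith)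
    linarith
  have hdhi : |d| < L - 2*r := by
    rw [hdabs]
    have h1 : |(s:ℝ) - (s':ℝ)| * (2*r + δ) ≤ ((N:ℝ) - 1) * (2*r + δ) :=
      mul_le_mul_of_nonneg_right habs2 (by linarith)
    have h2 : ((N:ℝ) - 1) * (2*r + δ) = 2*r*(N:ℝ) + (N:ℝ)*δ - 2*r - δ := by ring
    rw [h2, hNδ] at h1
    -- 2rN = xe j - xe i - 2v ≤ L - 2v
    have h3 : 2*r*(N:ℝ) = xe j - xe i - 2*v := by rw [hvj]; ring
    have h4 : xe j - xe i ≤ L := by linarith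
    linarith
  have := away L r d hL hdlo hdhi (round (L⁻¹ * d))
  rw [dist_circ_eq] at hdd
  have hqq : q s - q s' = d := rfl
  rw [hqq] at hdd
  linarith

lemma lemB (n : ℕ) (hn : 1 ≤ n) (L r : ℝ) (hr : 0 < r) (hL : 0 < L) (hcap : L ≤ 2*n*r)
    (x : ℕ → ℝ) (xe : ℕ → ℝ)
    (hxe' : ∀ k, 1 ≤ k → k ≤ n → xe (k + n) = x k + L)
    (hper : ∀ a, 1 ≤ a → a ≤ n → xe (a + n) = xe a + L)
    (M : ℝ) (hM0 : 0 ≤ M)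
    (hle : ∀ i k, 1 ≤ i → i < k → k < i + n → k ≤ 2*n →
      xe k - xe i - 2*r*((k:ℝ)-(i:ℝ)) ≤ 2*M) :
    ∃ y : ℕ → AddCircle L, CycCovers n L r y ∧ CycMaxMove n L x y ≤ M := by
  classical
  set f : ℕ → ℕ → ℝ := fun k i => xe i + M + 2*r*((k:ℝ) - (i:ℝ)) with hfdef
  set P : ℕ → ℝ := fun k => sInf (f k '' Set.Icc (k - n + 1) k) with hPdef
  have hwin : ∀ k, n + 1 ≤ k → (f k '' Set.Icc (k - n + 1) k).Nonempty :=
    fun k hk => ⟨f k k, ⟨k, ⟨by omega, le_rfl⟩, rfl⟩⟩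
  have hfin : ∀ k, ((f k '' Set.Icc (k - n + 1) k)).Finite :=
    fun k => (Set.finite_Icc _ _).image _
  have hPle : ∀ k i, n + 1 ≤ k → k - n + 1 ≤ i → i ≤ k → P k ≤ f k i := by
    intro k i hk h1 h2
    exact csInf_le (hfin k).bddBelow ⟨i, ⟨h1, h2⟩, rfl⟩
  have hlePk : ∀ k (c : ℝ), n + 1 ≤ k → (∀ i, k - n + 1 ≤ i → i ≤ k → c ≤ f k i) → c ≤ P k := by
    intro k c hk h
    exact le_csInf (hwin k hk) (by rintro b ⟨i, ⟨h1, h2⟩, rfl⟩; exact h i h1 h2)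
  have hPmem : ∀ k, n + 1 ≤ k → ∃ i, k - n + 1 ≤ i ∧ i ≤ k ∧ P k = f k i := by
    intro k hk
    have := (hwin k hk).csInf_mem (hfin k)
    obtain ⟨i, ⟨h1, h2⟩, heq⟩ := this
    exact ⟨i, h1, h2, heq.symm⟩
  -- movement bound
  have hB1 : ∀ k, n + 1 ≤ k → k ≤ 2*n → |P k - xe k| ≤ M := by
    intro k hk1 hk2
    rw [abs_le]
    constructor
    · have : xe k - M ≤ P k := by
        apply hlePk k _ hk1
        intro i h1 h2
        rw [hfdef]
        simp only []
        rcases eq_or_lt_of_le h2 with heq | hlt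
        · subst heq; simp; linarith
        · have hik : (i:ℝ) ≤ (k:ℝ) := by exact_mod_cast h2
          have := hle i k (by omega) hlt (by omega) hk2
          linarith
      linarith
    · have : P k ≤ f k k := hPle k k hk1 (by omega) le_rfl
      rw [hfdef] at this
      simp only [sub_self, mul_zero, add_zero] at this
      linarith
  -- gap bound
  have hB2 : ∀ k, n + 1 ≤ k → k < 2*n → P (k+1) ≤ P k + 2*r := by
    intro k hk1 hk2
    obtain ⟨i0, h1, h2, heq⟩ := hPmem k hk1
    rcases eq_or_lt_of_le h1 with he | hlt
    · -- i0 = k - n + 1 : use the periodicity/capacity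
      have hwk : k + 1 - n + 1 ≤ k + 1 := by omega
      have hstep : P (k+1) ≤ f (k+1) (k+1) := hPle (k+1) (k+1) (by omega) hwk le_rfl
      have ha : 1 ≤ k + 1 - n ∧ k + 1 - n ≤ n := ⟨by omega, by omega⟩
      have hperk : xe (k + 1 - n + n) = xe (k + 1 - n) + L := hper _ ha.1 ha.2
      have hkn : k + 1 - n + n = k + 1 := by omega
      rw [hkn] at hperk
      have hi0 : i0 = k + 1 - n := by omega
      have hcast : (k:ℝ) - ((i0:ℕ):ℝ) = (n:ℝ) - 1 := by
        have : ((i0:ℕ):ℝ) = (k:ℝ) + 1 - (n:ℝ) := by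
          rw [hi0]; push_cast [Nat.cast_sub (by omega : n ≤ k + 1)]; ring
        rw [this]; ring
      have hPk : P k = xe i0 + M + 2*r*((n:ℝ) - 1) := by
        rw [heq, hfdef]; simp only []; rw [hcast]
      rw [hfdef] at hstep
      simp only [sub_self, mul_zero, add_zero] at hstep
      have hxei0 : xe (k+1) = xe i0 + L := by rw [hi0] at *; exact hperk
      rw [hPk]
      have hn' : (1:ℝ) ≤ (n:ℝ) := by exact_mod_cast hn
      calc P (k+1) ≤ xe (k+1) + M := hstep
        _ = xe i0 + L + M := by rw [hxei0]
        _ ≤ xe i0 + M + 2*r*((n:ℝ) - 1) + 2*r := by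
            have : (2:ℝ)*(n:ℝ)*r = 2*r*((n:ℝ)-1) + 2*r := by ring
            linarith [hcap]
    · -- i0 ≥ k - n + 2, so i0 is in the window of k+1
      have : P (k+1) ≤ f (k+1) i0 := hPle (k+1) i0 (by omega) (by omega) (by omega)
      rw [hfdef] at this
      simp only [] at this
      rw [heq, hfdef]
      simp only []
      have : ((k:ℝ) + 1) - (i0:ℝ) = ((k:ℝ) - (i0:ℝ)) + 1 := by ring
      calc P (k+1) ≤ xe i0 + M + 2*r*(((k:ℕ)+1:ℝ) - (i0:ℝ)) := by
            convert hPle (k+1) i0 (by omega) (by omega) (by omega) using 2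
            push_cast; ring
        _ = xe i0 + M + 2*r*((k:ℝ) - (i0:ℝ)) + 2*r := by push_cast; ring
  -- wrap bound
  have hB3 : P (n+1) + L ≤ P (2*n) + 2*r := by
    obtain ⟨i0, h1, h2, heq⟩ := hPmem (2*n) (by omega)
    have hw2n : 2*n - n + 1 = n + 1 := by omega
    rw [hw2n] at h1
    rcases eq_or_lt_of_le h1 with he | hlt
    · -- i0 = n+1
      have hstep : P (n+1) ≤ f (n+1) (n+1) := hPle (n+1) (n+1) (by omega) (by omega) le_rfl
      rw [hfdef] at hstep
      simp only [sub_self, mul_zero, add_zero] at hstep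
      have hP2n : P (2*n) = xe (n+1) + M + 2*r*((n:ℝ) - 1) := by
        rw [heq, ← he, hfdef]
        simp only []
        congr 1
        push_cast; ring
      rw [hP2n]
      have : (2:ℝ)*(n:ℝ)*r = 2*r*((n:ℝ)-1) + 2*r := by ring
      linarith [hcap]
    · -- i0 ≥ n+2
      have ha : 1 ≤ i0 - n ∧ i0 - n ≤ n := ⟨by omega, by omega⟩
      have hperi : xe (i0 - n + n) = xe (i0 - n) + L := hper _ ha.1 ha.2
      have hkn : i0 - n + n = i0 := by omega
      rw [hkn] at hperi
      have hstep : P (n+1) ≤ f (n+1) (i0 - n) :=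
        hPle (n+1) (i0 - n) (by omega) (by omega) (by omega)
      rw [hfdef] at hstep
      simp only [] at hstep
      rw [heq, hfdef]
      simp only []
      have hcast : ((i0 - n : ℕ):ℝ) = (i0:ℝ) - (n:ℝ) := by
        push_cast [Nat.cast_sub (by omega : n ≤ i0)]; ring
      rw [hcast] at hstep
      have hxe0 : xe (i0 - n) = xe i0 - L := by linarith [hperi]
      rw [hxe0] at hstep
      have : ((n:ℝ)+1) - ((i0:ℝ) - (n:ℝ)) = ((2*n:ℕ):ℝ) - (i0:ℝ) + 1 := by push_cast; ring
      calc P (n+1) + L ≤ xe i0 - L + M + 2*r*(((n:ℕ):ℝ)+1 - ((i0:ℝ) - (n:ℝ))) + L := by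
            convert add_le_add hstep (le_refl L) using 2
            · rfl
            push_cast; ring
        _ = xe i0 + M + 2*r*(((2*n:ℕ):ℝ) - (i0:ℝ)) + 2*r := by push_cast; ring
  -- assemble
  refine ⟨fun k => ((P (k + n) : ℝ) : AddCircle L), ?_, ?_⟩
  · intro q
    obtain ⟨k, hk1, hk2, hkd⟩ := chain_cover L r hL P (n+1) (2*n) (by omega)
      (fun k h1 h2 => hB2 k h1 h2) hB3 q
    refine ⟨k - n, by omega, by omega, ?_⟩
    show dist q ((P (k - n + n) : ℝ) : AddCircle L) ≤ r
    have hkk : k - n + n = k := by omega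
    rw [hkk]
    exact hkd
  · apply csSup_le
    · exact ⟨_, ⟨1, ⟨le_rfl, hn⟩, rfl⟩⟩
    · rintro b ⟨k, ⟨hk1, hk2⟩, rfl⟩
      simp only []
      have hxkn : ((x k : ℝ) : AddCircle L) = ((xe (k + n) : ℝ) : AddCircle L) := by
        rw [hxe' k hk1 hk2]
        exact (AddCircle.coe_add_period L (x k)).symm
      rw [hxkn]
      calc dist ((xe (k+n) : ℝ) : AddCircle L) ((P (k+n) : ℝ) : AddCircle L)
          ≤ |xe (k+n) - P (k+n)| := dist_circ_le L hL _ _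
        _ ≤ M := by
            rw [abs_sub_comm]
            exact hB1 (k+n) (by omega) (by omega)

/-- Simple cycle barrier coverage: if `λ* > 0`, then `λ*` equals the maximum of the set
`Λ = {(x j − x i − 2r(j−i))/2 : 1 ≤ i ≤ n, i < j < i + n}`, where the extended
coordinates satisfy `x (k+n) = x k + L` for `1 ≤ k ≤ n`. -/
theorem stmt15 (n : ℕ) (hn : 1 ≤ n) (L r : ℝ) (hr : 0 < r) (h2r : 2 * r < L)
    (hcap : L ≤ 2 * n * r)
    (x : ℕ → ℝ) (hx0 : 0 < x 1) (hxL : x n < L)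
    (hsort : ∀ i j, 1 ≤ i → i ≤ j → j ≤ n → x i ≤ x j)
    (xe : ℕ → ℝ)
    (hxe : ∀ k, 1 ≤ k → k ≤ n → xe k = x k)
    (hxe' : ∀ k, 1 ≤ k → k ≤ n → xe (k + n) = x k + L)
    (hlam : 0 < CycLamStar n L r x) :
    IsGreatest {v : ℝ | ∃ i j, 1 ≤ i ∧ i ≤ n ∧ i < j ∧ j < i + n ∧
        v = (xe j - xe i - 2 * r * ((j : ℝ) - (i : ℝ))) / 2}
      (CycLamStar n L r x) := by
  have hL : 0 < L := by linarith
  have hn2 : 2 ≤ n := by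
    by_contra h
    have : n = 1 := by omega
    subst this
    push_cast at hcap
    linarith
  have hmono := xe_mono n L x xe hL hx0 hxL hsort hxe hxe'
  have hper : ∀ a, 1 ≤ a → a ≤ n → xe (a + n) = xe a + L := by
    intro a h1 h2
    rw [hxe' a h1 h2, hxe a h1 h2]
  -- the finite set of candidate values
  set T : Finset (ℕ × ℕ) :=
    ((Finset.Icc 1 n) ×ˢ (Finset.Icc 1 (2*n))).filter
      (fun q => q.1 < q.2 ∧ q.2 < q.1 + n) with hTdef
  have hT : T.Nonempty := by
    refine ⟨(1, 2), ?_⟩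
    rw [hTdef, Finset.mem_filter, Finset.mem_product, Finset.mem_Icc, Finset.mem_Icc]
    refine ⟨⟨⟨le_rfl, hn⟩, ⟨by omega, by omega⟩⟩, by omega, by omega⟩
  set F : ℕ × ℕ → ℝ := fun q => (xe q.2 - xe q.1 - 2*r*((q.2:ℝ) - (q.1:ℝ)))/2 with hFdef
  set M : ℝ := T.sup' hT F with hMdef
  -- every pair (extended) is bounded by 2M
  have le_M : ∀ i k, 1 ≤ i → i < k → k < i + n → k ≤ 2*n →
      xe k - xe i - 2*r*((k:ℝ)-(i:ℝ)) ≤ 2*M := by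
    intro i k h1 h2 h3 h4
    rcases le_or_gt i n with hin | hin
    · have hmem : (i, k) ∈ T := by
        rw [hTdef, Finset.mem_filter, Finset.mem_product, Finset.mem_Icc, Finset.mem_Icc]
        exact ⟨⟨⟨h1, hin⟩, ⟨by omega, h4⟩⟩, h2, h3⟩
      have := Finset.le_sup' F hmem
      rw [← hMdef] at this
      rw [hFdef] at this
      simp only [] at this
      linarith
    · have hi1 : 1 ≤ i - n := by omega
      have hin' : i - n ≤ n := by omega
      have hk1 : 1 ≤ k - n := by omega
      have hkn' : k - n ≤ n := by omega
      have e1 : xe i = xe (i - n) + L := by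
        have := hper (i - n) hi1 hin'
        rwa [Nat.sub_add_cancel (by omega)] at this
      have e2 : xe k = xe (k - n) + L := by
        have := hper (k - n) hk1 hkn'
        rwa [Nat.sub_add_cancel (by omega)] at this
      have hcast : (k:ℝ) - (i:ℝ) = ((k - n : ℕ):ℝ) - ((i - n : ℕ):ℝ) := by
        push_cast [Nat.cast_sub (by omega : n ≤ k), Nat.cast_sub (by omega : n ≤ i)]
        ring
      have hmem : (i - n, k - n) ∈ T := by
        rw [hTdef, Finset.mem_filter, Finset.mem_product, Finset.mem_Icc, Finset.mem_Icc]
        exact ⟨⟨⟨hi1, hin'⟩, ⟨hk1, by omega⟩⟩, by omega, by omega⟩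
      have := Finset.le_sup' F hmem
      rw [← hMdef] at this
      rw [hFdef] at this
      simp only [] at this
      rw [e1, e2, hcast]
      linarith
  -- construction: a covering placement with max movement ≤ max M 0
  have le_M' : ∀ i k, 1 ≤ i → i < k → k < i + n → k ≤ 2*n →
      xe k - xe i - 2*r*((k:ℝ)-(i:ℝ)) ≤ 2*(max M 0) := by
    intro i k h1 h2 h3 h4
    have := le_M i k h1 h2 h3 h4
    have h5 : M ≤ max M 0 := le_max_left _ _
    linarith
  obtain ⟨y0, hy0cov, hy0mm⟩ := lemB n hn L r hr hL hcap x xe hxe' hper (max M 0)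
    (le_max_right _ _) le_M'
  have hSetNE : (CycMaxMove n L x '' {y : ℕ → AddCircle L | CycCovers n L r y}).Nonempty :=
    ⟨_, ⟨y0, hy0cov, rfl⟩⟩
  have hBdd : BddBelow (CycMaxMove n L x '' {y : ℕ → AddCircle L | CycCovers n L r y}) := by
    refine ⟨0, ?_⟩
    rintro b ⟨y, hy, rfl⟩
    have hbdd : BddAbove ((fun i => dist ((x i : AddCircle L)) (y i)) '' Set.Icc 1 n) :=
      ((Set.finite_Icc 1 n).image _).bddAbove
    exact le_trans dist_nonneg (le_csSup hbdd ⟨1, ⟨le_rfl, hn⟩, rfl⟩)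
  have hlamle : CycLamStar n L r x ≤ max M 0 := by
    refine le_trans (csInf_le hBdd ⟨y0, hy0cov, rfl⟩) hy0mm
  -- lower bound: every candidate value is at most λ*
  have hAll : ∀ i j, 1 ≤ i → i ≤ n → i < j → j < i + n →
      (xe j - xe i - 2*r*((j:ℝ)-(i:ℝ)))/2 ≤ CycLamStar n L r x := by
    intro i j h1 h2 h3 h4
    apply le_csInf hSetNE
    rintro b ⟨y, hy, rfl⟩
    have hpos : 0 < CycMaxMove n L x y :=
      lt_of_lt_of_le hlam (csInf_le hBdd ⟨y, hy, rfl⟩)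
    exact lemA n hn L r hr hL x hx0 hxL hsort xe hxe hxe' hmono hper y hy hpos i j h1 h2 h3 h4
  -- M is attained and M ≤ λ*
  obtain ⟨⟨i0, j0⟩, hq0mem, hMeq⟩ := T.exists_mem_eq_sup' hT F
  rw [hTdef, Finset.mem_filter, Finset.mem_product, Finset.mem_Icc, Finset.mem_Icc] at hq0mem
  obtain ⟨⟨⟨hi01, hi0n⟩, ⟨hj01, hj02n⟩⟩, hij0, hj0n⟩ := hq0mem
  have hMle : M ≤ CycLamStar n L r x := by
    rw [hMdef, hMeq]
    exact hAll i0 j0 hi01 hi0n hij0 hj0n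
  have hMpos : 0 < M := by
    rcases le_or_gt M 0 with h | h
    · rw [max_eq_right h] at hlamle
      linarith
    · exact h
  have hEq : CycLamStar n L r x = M := by
    rw [max_eq_left hMpos.le] at hlamle
    linarith
  constructor
  · exact ⟨i0, j0, hi01, hi0n, hij0, hj0n, by rw [hEq, hMdef, hMeq]⟩
  · rintro v ⟨i, j, h1, h2, h3, h4, rfl⟩
    exact hAll i j h1 h2 h3 h4
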